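/- For every even integer r ≥ 4 and every integer h ≥ 1, the Wiener polarity index of the armchair nanotube AT(r,h) equals 9rh + r. -/

import Mathlib

/-- The armchair nanotube `AT(r,h)` with `r` columns of hexagons, each containing `h` hexagons:
vertex set `ZMod r × {0,…,2h+1}`; vertical edges join `(i,j)` and `(i,j+1)`, and horizontal
edges join `(i,j)` and `(i+1,j)` when `i + j` is even. -/
def AT (r h : ℕ) : SimpleGraph (ZMod r × Fin (2 * h + 2)) :=
  SimpleGraph.fromRel (fun p q =>
    (p.1 = q.1 ∧ (q.2 : ℕ) = (p.2 : ℕ) + 1) ∨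
    (p.2 = q.2 ∧ q.1 = p.1 + 1 ∧ Even (p.1.val + (p.2 : ℕ))))

/-- The Wiener polarity index of a simple graph: the number of unordered pairs
of vertices at (shortest-path) distance `3`. -/
noncomputable def wienerPolarity {V : Type*} (G : SimpleGraph V) : ℕ :=
  Nat.card {p : Sym2 V // Sym2.lift ⟨fun u v => G.dist u v, fun _ _ => SimpleGraph.dist_comm⟩ p = 3}

section AuxAT

variable {r h : ℕ}

lemma step_parity (hr : 4 ≤ r) (hre : 2 ∣ r) (x : ZMod r) :
    have : NeZero r := ⟨by omega⟩
    (x + 1).val % 2 = (x.val + 1) % 2 := by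
  haveI : NeZero r := ⟨by omega⟩
  rw [ZMod.val_add, ZMod.val_one'' (by omega)]
  exact Nat.mod_mod_of_dvd _ hre

lemma shift_ne (hr : 4 ≤ r) (x : ZMod r) (k : ℕ) (h1 : 0 < k) (h2 : k < 4) :
    x + (k : ZMod r) ≠ x := by
  intro hcon
  have h0 : (k : ZMod r) = 0 := by
    have := congrArg (fun y => y - x) hcon
    simpa [add_comm, add_sub_cancel_right] using this
  rw [ZMod.natCast_eq_zero_iff] at h0
  exact absurd (Nat.le_of_dvd h1 h0) (by omega)

lemma adj_cases {p q : ZMod r × Fin (2 * h + 2)} (hadj : (AT r h).Adj p q) :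
    (q.1 = p.1 ∧ (q.2 : ℕ) = (p.2 : ℕ) + 1) ∨
    (q.1 = p.1 ∧ (p.2 : ℕ) = (q.2 : ℕ) + 1) ∨
    (q.1 = p.1 + 1 ∧ (q.2 : ℕ) = (p.2 : ℕ) ∧ (p.1.val + (p.2 : ℕ)) % 2 = 0) ∨
    (p.1 = q.1 + 1 ∧ (q.2 : ℕ) = (p.2 : ℕ) ∧ (q.1.val + (q.2 : ℕ)) % 2 = 0) := by
  rw [AT, SimpleGraph.fromRel_adj] at hadj
  obtain ⟨-, (⟨h1, h2⟩ | ⟨h1, h2, h3⟩) | (⟨h1, h2⟩ | ⟨h1, h2, h3⟩)⟩ := hadj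
  · exact Or.inl ⟨h1.symm, h2⟩
  · exact Or.inr (Or.inr (Or.inl ⟨h2, by rw [h1], by rw [Nat.even_iff] at h3; exact h3⟩))
  · exact Or.inr (Or.inl ⟨h1, h2⟩)
  · exact Or.inr (Or.inr (Or.inr ⟨h2, by rw [h1], by rw [Nat.even_iff] at h3; exact h3⟩))

lemma adj_vert {p q : ZMod r × Fin (2 * h + 2)} (h1 : q.1 = p.1)
    (h2 : (q.2 : ℕ) = (p.2 : ℕ) + 1) : (AT r h).Adj p q := by
  rw [AT, SimpleGraph.fromRel_adj]
  refine ⟨fun hc => by simp [hc] at h2, Or.inl (Or.inl ⟨h1.symm, h2⟩)⟩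

lemma adj_horiz (hr : 4 ≤ r) {p q : ZMod r × Fin (2 * h + 2)} (h1 : q.1 = p.1 + 1)
    (h2 : (q.2 : ℕ) = (p.2 : ℕ)) (h3 : (p.1.val + (p.2 : ℕ)) % 2 = 0) : (AT r h).Adj p q := by
  rw [AT, SimpleGraph.fromRel_adj]
  refine ⟨fun hc => ?_, Or.inl (Or.inr ⟨Fin.ext h2.symm, h1, Nat.even_iff.mpr h3⟩)⟩
  rw [hc] at h1
  exact shift_ne hr q.1 1 one_pos (by omega) (by simpa using h1.symm)

lemma adj_parity (hr : 4 ≤ r) (hre : 2 ∣ r) {p q : ZMod r × Fin (2 * h + 2)}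
    (hadj : (AT r h).Adj p q) :
    (q.1.val + (q.2 : ℕ)) % 2 ≠ (p.1.val + (p.2 : ℕ)) % 2 := by
  obtain ⟨h1, h2⟩ | ⟨h1, h2⟩ | ⟨h1, h2, h3⟩ | ⟨h1, h2, h3⟩ := adj_cases hadj
  · rw [h1]; omega
  · rw [h1]; omega
  · rw [h1]; have := step_parity hr hre p.1; omega
  · rw [h1]; have := step_parity hr hre q.1; omega

lemma walk_parity (hr : 4 ≤ r) (hre : 2 ∣ r) {p q : ZMod r × Fin (2 * h + 2)}
    (w : (AT r h).Walk p q) :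
    (p.1.val + (p.2 : ℕ) + w.length) % 2 = (q.1.val + (q.2 : ℕ)) % 2 := by
  induction w with
  | nil => simp
  | cons hadj w ih =>
      have := adj_parity hr hre hadj
      simp only [SimpleGraph.Walk.length_cons] at *
      omega

lemma dist3_iff (hr : 4 ≤ r) (hre : 2 ∣ r) (u v : ZMod r × Fin (2 * h + 2)) :
    (AT r h).dist u v = 3 ↔
      ((∃ a b, (AT r h).Adj u a ∧ (AT r h).Adj a b ∧ (AT r h).Adj b v) ∧
        ¬ (AT r h).Adj u v ∧ u ≠ v) := by
  constructor
  · intro hd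
    have hreach : (AT r h).Reachable u v := by
      by_contra hcon
      rw [SimpleGraph.dist_eq_zero_iff_eq_or_not_reachable.mpr (Or.inr hcon)] at hd
      omega
    obtain ⟨w, hw⟩ := hreach.exists_walk_length_eq_dist
    rw [hd] at hw
    refine ⟨?_, fun hadj => ?_, fun hc => ?_⟩
    · match w, hw with
      | SimpleGraph.Walk.cons h1 (SimpleGraph.Walk.cons h2 (SimpleGraph.Walk.cons h3
          SimpleGraph.Walk.nil)), _ => exact ⟨_, _, h1, h2, h3⟩
    · have := SimpleGraph.dist_le hadj.toWalk
      simp [hd] at this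
    · rw [hc, SimpleGraph.dist_self] at hd; omega
  · rintro ⟨⟨a, b, h1, h2, h3⟩, hnadj, hne⟩
    have wlk : (AT r h).Walk u v := .cons h1 (.cons h2 (.cons h3 .nil))
    have hle : (AT r h).dist u v ≤ 3 := by
      simpa using SimpleGraph.dist_le (SimpleGraph.Walk.cons h1 (.cons h2 (.cons h3 .nil)))
    have hreach : (AT r h).Reachable u v := ⟨wlk⟩
    have hne0 : (AT r h).dist u v ≠ 0 := fun hc => hne (hreach.dist_eq_zero_iff.mp hc)
    obtain ⟨w, hw⟩ := hreach.exists_walk_length_eq_dist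
    have hpar3 : (u.1.val + (u.2 : ℕ) + 3) % 2 = (v.1.val + (v.2 : ℕ)) % 2 := by
      have := walk_parity hr hre (SimpleGraph.Walk.cons h1 (.cons h2 (.cons h3 .nil)))
      simpa using this
    have hparw : (u.1.val + (u.2 : ℕ) + w.length) % 2 = (v.1.val + (v.2 : ℕ)) % 2 :=
      walk_parity hr hre w
    have hne1 : (AT r h).dist u v ≠ 1 := by
      intro hc
      rw [hc] at hw
      match w, hw with
      | SimpleGraph.Walk.cons h1 SimpleGraph.Walk.nil, _ => exact hnadj h1
    have hne2 : (AT r h).dist u v ≠ 2 := by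
      intro hc
      rw [hc] at hw
      rw [hw] at hparw
      omega
    omega
def Bset {r h : ℕ} (u v : ZMod r × Fin (2 * h + 2)) : Prop :=
  (v.1 = u.1 + 2 ∧ (v.2 : ℕ) = (u.2 : ℕ) + 1) ∨
  (v.1 = u.1 + 2 ∧ (u.2 : ℕ) = (v.2 : ℕ) + 1) ∨
  (v.1 = u.1 + 1 ∧ (v.2 : ℕ) = (u.2 : ℕ) + 2) ∨
  (v.1 = u.1 + 1 ∧ (u.2 : ℕ) = (v.2 : ℕ) + 2) ∨
  (v.1 = u.1 - 1 ∧ (v.2 : ℕ) = (u.2 : ℕ) + 2) ∨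
  (v.1 = u.1 - 1 ∧ (u.2 : ℕ) = (v.2 : ℕ) + 2) ∨
  (v.1 = u.1 - 1 ∧ (v.2 : ℕ) = (u.2 : ℕ)) ∨
  (v.1 = u.1 ∧ (v.2 : ℕ) = (u.2 : ℕ) + 3) ∨
  (v.1 = u.1 ∧ (u.2 : ℕ) = (v.2 : ℕ) + 3)
lemma chain_classify (hr : 4 ≤ r) (hre : 2 ∣ r) {u a b v : ZMod r × Fin (2 * h + 2)}
    (heps : (u.1.val + (u.2 : ℕ)) % 2 = 0)
    (h1 : (AT r h).Adj u a) (h2 : (AT r h).Adj a b) (h3 : (AT r h).Adj b v)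
    (hnadj : ¬ (AT r h).Adj u v) : Bset u v := by
  have pa := adj_parity hr hre h1
  have pb := adj_parity hr hre h2
  have pv := adj_parity hr hre h3
  unfold Bset
  obtain ⟨e1, f1⟩ | ⟨e1, f1⟩ | ⟨e1, f1, g1⟩ | ⟨e1, f1, g1⟩ := adj_cases h1
  · obtain ⟨e2, f2⟩ | ⟨e2, f2⟩ | ⟨e2, f2, g2⟩ | ⟨e2, f2, g2⟩ := adj_cases h2
    · obtain ⟨e3, f3⟩ | ⟨e3, f3⟩ | ⟨e3, f3, g3⟩ | ⟨e3, f3, g3⟩ := adj_cases h3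
      · exact Or.inr (Or.inr (Or.inr (Or.inr (Or.inr (Or.inr (Or.inr (Or.inl ⟨by linear_combination e1 + e2 + e3, by omega⟩)))))))
      · exact absurd (adj_vert (by linear_combination e1 + e2 + e3) (by omega)) hnadj
      · exact Or.inr (Or.inr (Or.inl ⟨by linear_combination e1 + e2 + e3, by omega⟩))
      · omega
    · obtain ⟨e3, f3⟩ | ⟨e3, f3⟩ | ⟨e3, f3, g3⟩ | ⟨e3, f3, g3⟩ := adj_cases h3
      · exact absurd (adj_vert (by linear_combination e1 + e2 + e3) (by omega)) hnadj
      · exact absurd (adj_vert (p := v) (q := u) (by linear_combination -e1 - e2 - e3) (by omega)).symm hnadj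
      · exact absurd (adj_horiz hr (by linear_combination e1 + e2 + e3) (by omega) heps) hnadj
      · omega
    · obtain ⟨e3, f3⟩ | ⟨e3, f3⟩ | ⟨e3, f3, g3⟩ | ⟨e3, f3, g3⟩ := adj_cases h3
      · omega
      · omega
      · omega
      · omega
    · obtain ⟨e3, f3⟩ | ⟨e3, f3⟩ | ⟨e3, f3, g3⟩ | ⟨e3, f3, g3⟩ := adj_cases h3
      · exact Or.inr (Or.inr (Or.inr (Or.inr (Or.inl ⟨by linear_combination e1 - e2 + e3, by omega⟩))))
      · exact Or.inr (Or.inr (Or.inr (Or.inr (Or.inr (Or.inr (Or.inl ⟨by linear_combination e1 - e2 + e3, by omega⟩))))))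
      · exact absurd (adj_vert (by linear_combination e1 - e2 + e3) (by omega)) hnadj
      · omega
  · obtain ⟨e2, f2⟩ | ⟨e2, f2⟩ | ⟨e2, f2, g2⟩ | ⟨e2, f2, g2⟩ := adj_cases h2
    · obtain ⟨e3, f3⟩ | ⟨e3, f3⟩ | ⟨e3, f3, g3⟩ | ⟨e3, f3, g3⟩ := adj_cases h3
      · exact absurd (adj_vert (by linear_combination e1 + e2 + e3) (by omega)) hnadj
      · exact absurd (adj_vert (p := v) (q := u) (by linear_combination -e1 - e2 - e3) (by omega)).symm hnadj
      · exact absurd (adj_horiz hr (by linear_combination e1 + e2 + e3) (by omega) heps) hnadj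
      · omega
    · obtain ⟨e3, f3⟩ | ⟨e3, f3⟩ | ⟨e3, f3, g3⟩ | ⟨e3, f3, g3⟩ := adj_cases h3
      · exact absurd (adj_vert (p := v) (q := u) (by linear_combination -e1 - e2 - e3) (by omega)).symm hnadj
      · exact Or.inr (Or.inr (Or.inr (Or.inr (Or.inr (Or.inr (Or.inr (Or.inr (⟨by linear_combination e1 + e2 + e3, by omega⟩))))))))
      · exact Or.inr (Or.inr (Or.inr (Or.inl ⟨by linear_combination e1 + e2 + e3, by omega⟩)))
      · omega
    · obtain ⟨e3, f3⟩ | ⟨e3, f3⟩ | ⟨e3, f3, g3⟩ | ⟨e3, f3, g3⟩ := adj_cases h3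
      · omega
      · omega
      · omega
      · omega
    · obtain ⟨e3, f3⟩ | ⟨e3, f3⟩ | ⟨e3, f3, g3⟩ | ⟨e3, f3, g3⟩ := adj_cases h3
      · exact Or.inr (Or.inr (Or.inr (Or.inr (Or.inr (Or.inr (Or.inl ⟨by linear_combination e1 - e2 + e3, by omega⟩))))))
      · exact Or.inr (Or.inr (Or.inr (Or.inr (Or.inr (Or.inl ⟨by linear_combination e1 - e2 + e3, by omega⟩)))))
      · exact absurd (adj_vert (p := v) (q := u) (by linear_combination -e1 + e2 - e3) (by omega)).symm hnadj
      · omega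
  · obtain ⟨e2, f2⟩ | ⟨e2, f2⟩ | ⟨e2, f2, g2⟩ | ⟨e2, f2, g2⟩ := adj_cases h2
    · obtain ⟨e3, f3⟩ | ⟨e3, f3⟩ | ⟨e3, f3, g3⟩ | ⟨e3, f3, g3⟩ := adj_cases h3
      · exact Or.inr (Or.inr (Or.inl ⟨by linear_combination e1 + e2 + e3, by omega⟩))
      · exact absurd (adj_horiz hr (by linear_combination e1 + e2 + e3) (by omega) heps) hnadj
      · exact Or.inl ⟨by linear_combination e1 + e2 + e3, by omega⟩
      · omega
    · obtain ⟨e3, f3⟩ | ⟨e3, f3⟩ | ⟨e3, f3, g3⟩ | ⟨e3, f3, g3⟩ := adj_cases h3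
      · exact absurd (adj_horiz hr (by linear_combination e1 + e2 + e3) (by omega) heps) hnadj
      · exact Or.inr (Or.inr (Or.inr (Or.inl ⟨by linear_combination e1 + e2 + e3, by omega⟩)))
      · exact Or.inr (Or.inl ⟨by linear_combination e1 + e2 + e3, by omega⟩)
      · omega
    · obtain ⟨e3, f3⟩ | ⟨e3, f3⟩ | ⟨e3, f3, g3⟩ | ⟨e3, f3, g3⟩ := adj_cases h3
      · omega
      · omega
      · omega
      · omega
    · obtain ⟨e3, f3⟩ | ⟨e3, f3⟩ | ⟨e3, f3, g3⟩ | ⟨e3, f3, g3⟩ := adj_cases h3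
      · exact absurd (adj_vert (by linear_combination e1 - e2 + e3) (by omega)) hnadj
      · exact absurd (adj_vert (p := v) (q := u) (by linear_combination -e1 + e2 - e3) (by omega)).symm hnadj
      · exact absurd (adj_horiz hr (by linear_combination e1 - e2 + e3) (by omega) heps) hnadj
      · omega
  · obtain ⟨e2, f2⟩ | ⟨e2, f2⟩ | ⟨e2, f2, g2⟩ | ⟨e2, f2, g2⟩ := adj_cases h2
    · obtain ⟨e3, f3⟩ | ⟨e3, f3⟩ | ⟨e3, f3, g3⟩ | ⟨e3, f3, g3⟩ := adj_cases h3
      · omega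
      · omega
      · omega
      · omega
    · obtain ⟨e3, f3⟩ | ⟨e3, f3⟩ | ⟨e3, f3, g3⟩ | ⟨e3, f3, g3⟩ := adj_cases h3
      · omega
      · omega
      · omega
      · omega
    · obtain ⟨e3, f3⟩ | ⟨e3, f3⟩ | ⟨e3, f3, g3⟩ | ⟨e3, f3, g3⟩ := adj_cases h3
      · omega
      · omega
      · omega
      · omega
    · obtain ⟨e3, f3⟩ | ⟨e3, f3⟩ | ⟨e3, f3, g3⟩ | ⟨e3, f3, g3⟩ := adj_cases h3
      · omega
      · omega
      · omega
      · omega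


lemma step_parity' (hr : 4 ≤ r) (hre : 2 ∣ r) (x : ZMod r) :
    (x - 1).val % 2 = (x.val + 1) % 2 := by
  have h := step_parity hr hre (x - 1)
  rw [sub_add_cancel] at h
  omega

lemma B_not_adj (hr : 4 ≤ r) (hre : 2 ∣ r) {u v : ZMod r × Fin (2 * h + 2)}
    (heps : (u.1.val + (u.2 : ℕ)) % 2 = 0) (hB : Bset u v) : ¬ (AT r h).Adj u v := by
  intro hadj
  rcases hB with ⟨hi, hj⟩ | ⟨hi, hj⟩ | ⟨hi, hj⟩ | ⟨hi, hj⟩ | ⟨hi, hj⟩ | ⟨hi, hj⟩ |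
    ⟨hi, hj⟩ | ⟨hi, hj⟩ | ⟨hi, hj⟩ <;>
    rcases adj_cases hadj with ⟨e, f⟩ | ⟨e, f⟩ | ⟨e, f, g⟩ | ⟨e, f, g⟩ <;>
    first
    | omega
    | (exact shift_ne hr u.1 2 (by omega) (by omega) (by push_cast; linear_combination e - hi))
    | (exact shift_ne hr (u.1 - 1) 2 (by omega) (by omega) (by push_cast; linear_combination hi - e))
    | (rw [hi] at g; have hsp := step_parity' hr hre u.1; omega)

lemma B_ne (hr : 4 ≤ r) {u v : ZMod r × Fin (2 * h + 2)} (hB : Bset u v) : u ≠ v := by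
  intro hc
  subst hc
  rcases hB with ⟨hi, hj⟩ | ⟨hi, hj⟩ | ⟨hi, hj⟩ | ⟨hi, hj⟩ | ⟨hi, hj⟩ | ⟨hi, hj⟩ |
    ⟨hi, hj⟩ | ⟨hi, hj⟩ | ⟨hi, hj⟩ <;>
    first
    | omega
    | (exact shift_ne hr u.1 2 (by omega) (by omega) (by push_cast; linear_combination -hi))
    | (exact shift_ne hr u.1 1 (by omega) (by omega) (by push_cast; linear_combination hi))

lemma adj_vertP (i : ZMod r) (j1 j2 : Fin (2 * h + 2)) (hj : (j2 : ℕ) = (j1 : ℕ) + 1) :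
    (AT r h).Adj (i, j1) (i, j2) := adj_vert rfl hj

lemma adj_vertM (i : ZMod r) (j1 j2 : Fin (2 * h + 2)) (hj : (j1 : ℕ) = (j2 : ℕ) + 1) :
    (AT r h).Adj (i, j1) (i, j2) := (adj_vert (p := (i, j2)) (q := (i, j1)) rfl hj).symm

lemma adj_horizP (hr : 4 ≤ r) (i1 i2 : ZMod r) (j1 j2 : Fin (2 * h + 2)) (hi : i2 = i1 + 1)
    (hj : (j2 : ℕ) = (j1 : ℕ)) (hp : (i1.val + (j1 : ℕ)) % 2 = 0) :
    (AT r h).Adj (i1, j1) (i2, j2) :=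
  adj_horiz hr (p := (i1, j1)) (q := (i2, j2)) hi hj hp

lemma adj_horizM (hr : 4 ≤ r) (i1 i2 : ZMod r) (j1 j2 : Fin (2 * h + 2)) (hi : i1 = i2 + 1)
    (hj : (j2 : ℕ) = (j1 : ℕ)) (hp : (i2.val + (j2 : ℕ)) % 2 = 0) :
    (AT r h).Adj (i1, j1) (i2, j2) :=
  (adj_horiz hr (p := (i2, j2)) (q := (i1, j1)) hi hj.symm hp).symm

lemma B_chain (hr : 4 ≤ r) (hre : 2 ∣ r) {u v : ZMod r × Fin (2 * h + 2)}
    (heps : (u.1.val + (u.2 : ℕ)) % 2 = 0) (hB : Bset u v) :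
    ∃ a b, (AT r h).Adj u a ∧ (AT r h).Adj a b ∧ (AT r h).Adj b v := by
  have hu2 := u.2.isLt
  have hv2 := v.2.isLt
  have hsp := step_parity hr hre u.1
  have hsp' := step_parity' hr hre u.1
  rcases hB with ⟨hi, hj⟩ | ⟨hi, hj⟩ | ⟨hi, hj⟩ | ⟨hi, hj⟩ | ⟨hi, hj⟩ | ⟨hi, hj⟩ |
    ⟨hi, hj⟩ | ⟨hi, hj⟩ | ⟨hi, hj⟩
  · -- (2,1) : R U R
    exact ⟨(u.1 + 1, u.2), (u.1 + 1, v.2),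
      adj_horizP hr u.1 (u.1 + 1) u.2 u.2 rfl rfl heps,
      adj_vertP (u.1 + 1) u.2 v.2 hj,
      adj_horizP hr (u.1 + 1) v.1 v.2 v.2 (by rw [hi]; ring) rfl (by omega)⟩
  · -- (2,-1) : R D R
    exact ⟨(u.1 + 1, u.2), (u.1 + 1, v.2),
      adj_horizP hr u.1 (u.1 + 1) u.2 u.2 rfl rfl heps,
      adj_vertM (u.1 + 1) u.2 v.2 hj,
      adj_horizP hr (u.1 + 1) v.1 v.2 v.2 (by rw [hi]; ring) rfl (by omega)⟩
  · -- (1,2) : R U U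
    exact ⟨(u.1 + 1, u.2), (u.1 + 1, ⟨(u.2 : ℕ) + 1, by omega⟩),
      adj_horizP hr u.1 (u.1 + 1) u.2 u.2 rfl rfl heps,
      adj_vertP (u.1 + 1) u.2 ⟨(u.2 : ℕ) + 1, by omega⟩ rfl,
      adj_vert (p := (u.1 + 1, (⟨(u.2 : ℕ) + 1, by omega⟩ : Fin (2 * h + 2)))) (q := v) hi
        (by show (v.2 : ℕ) = (u.2 : ℕ) + 1 + 1; omega)⟩
  · -- (1,-2) : R D D
    exact ⟨(u.1 + 1, u.2), (u.1 + 1, ⟨(u.2 : ℕ) - 1, by omega⟩),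
      adj_horizP hr u.1 (u.1 + 1) u.2 u.2 rfl rfl heps,
      adj_vertM (u.1 + 1) u.2 ⟨(u.2 : ℕ) - 1, by omega⟩ (by show (u.2 : ℕ) = (u.2 : ℕ) - 1 + 1; omega),
      (adj_vert (p := v) (q := (u.1 + 1, (⟨(u.2 : ℕ) - 1, by omega⟩ : Fin (2 * h + 2))))
        (by rw [hi]) (by show (u.2 : ℕ) - 1 = (v.2 : ℕ) + 1; omega)).symm⟩
  · -- (-1,2) : U L U
    exact ⟨(u.1, ⟨(u.2 : ℕ) + 1, by omega⟩), (u.1 - 1, ⟨(u.2 : ℕ) + 1, by omega⟩),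
      adj_vertP u.1 u.2 ⟨(u.2 : ℕ) + 1, by omega⟩ rfl,
      adj_horizM hr u.1 (u.1 - 1) ⟨(u.2 : ℕ) + 1, by omega⟩ ⟨(u.2 : ℕ) + 1, by omega⟩
        (by ring) rfl (by show ((u.1 - 1).val + ((u.2 : ℕ) + 1)) % 2 = 0; omega),
      adj_vert (p := (u.1 - 1, (⟨(u.2 : ℕ) + 1, by omega⟩ : Fin (2 * h + 2)))) (q := v) hi
        (by show (v.2 : ℕ) = (u.2 : ℕ) + 1 + 1; omega)⟩
  · -- (-1,-2) : D L D
    exact ⟨(u.1, ⟨(u.2 : ℕ) - 1, by omega⟩), (u.1 - 1, ⟨(u.2 : ℕ) - 1, by omega⟩),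
      adj_vertM u.1 u.2 ⟨(u.2 : ℕ) - 1, by omega⟩ (by show (u.2 : ℕ) = (u.2 : ℕ) - 1 + 1; omega),
      adj_horizM hr u.1 (u.1 - 1) ⟨(u.2 : ℕ) - 1, by omega⟩ ⟨(u.2 : ℕ) - 1, by omega⟩
        (by ring) rfl (by show ((u.1 - 1).val + ((u.2 : ℕ) - 1)) % 2 = 0; omega),
      (adj_vert (p := v) (q := (u.1 - 1, (⟨(u.2 : ℕ) - 1, by omega⟩ : Fin (2 * h + 2))))
        (by rw [hi]) (by show (u.2 : ℕ) - 1 = (v.2 : ℕ) + 1; omega)).symm⟩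
  · -- (-1,0) : U L D or D L U
    by_cases hcase : (u.2 : ℕ) + 1 < 2 * h + 2
    · exact ⟨(u.1, ⟨(u.2 : ℕ) + 1, by omega⟩), (u.1 - 1, ⟨(u.2 : ℕ) + 1, by omega⟩),
        adj_vertP u.1 u.2 ⟨(u.2 : ℕ) + 1, by omega⟩ rfl,
        adj_horizM hr u.1 (u.1 - 1) ⟨(u.2 : ℕ) + 1, by omega⟩ ⟨(u.2 : ℕ) + 1, by omega⟩
          (by ring) rfl (by show ((u.1 - 1).val + ((u.2 : ℕ) + 1)) % 2 = 0; omega),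
        (adj_vert (p := v) (q := (u.1 - 1, (⟨(u.2 : ℕ) + 1, by omega⟩ : Fin (2 * h + 2))))
          (by rw [hi]) (by show (u.2 : ℕ) + 1 = (v.2 : ℕ) + 1; omega)).symm⟩
    · exact ⟨(u.1, ⟨(u.2 : ℕ) - 1, by omega⟩), (u.1 - 1, ⟨(u.2 : ℕ) - 1, by omega⟩),
        adj_vertM u.1 u.2 ⟨(u.2 : ℕ) - 1, by omega⟩ (by show (u.2 : ℕ) = (u.2 : ℕ) - 1 + 1; omega),
        adj_horizM hr u.1 (u.1 - 1) ⟨(u.2 : ℕ) - 1, by omega⟩ ⟨(u.2 : ℕ) - 1, by omega⟩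
          (by ring) rfl (by show ((u.1 - 1).val + ((u.2 : ℕ) - 1)) % 2 = 0; omega),
        adj_vert (p := (u.1 - 1, (⟨(u.2 : ℕ) - 1, by omega⟩ : Fin (2 * h + 2)))) (q := v) hi
          (by show (v.2 : ℕ) = (u.2 : ℕ) - 1 + 1; omega)⟩
  · -- (0,3) : U U U
    exact ⟨(u.1, ⟨(u.2 : ℕ) + 1, by omega⟩), (u.1, ⟨(u.2 : ℕ) + 2, by omega⟩),
      adj_vertP u.1 u.2 ⟨(u.2 : ℕ) + 1, by omega⟩ rfl,
      adj_vertP u.1 ⟨(u.2 : ℕ) + 1, by omega⟩ ⟨(u.2 : ℕ) + 2, by omega⟩ rfl,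
      adj_vert (p := (u.1, (⟨(u.2 : ℕ) + 2, by omega⟩ : Fin (2 * h + 2)))) (q := v) hi
        (by show (v.2 : ℕ) = (u.2 : ℕ) + 2 + 1; omega)⟩
  · -- (0,-3) : D D D
    exact ⟨(u.1, ⟨(u.2 : ℕ) - 1, by omega⟩), (u.1, ⟨(u.2 : ℕ) - 2, by omega⟩),
      adj_vertM u.1 u.2 ⟨(u.2 : ℕ) - 1, by omega⟩ (by show (u.2 : ℕ) = (u.2 : ℕ) - 1 + 1; omega),
      adj_vertM u.1 ⟨(u.2 : ℕ) - 1, by omega⟩ ⟨(u.2 : ℕ) - 2, by omega⟩ (by show (u.2 : ℕ) - 1 = (u.2 : ℕ) - 2 + 1; omega),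
      (adj_vert (p := v) (q := (u.1, (⟨(u.2 : ℕ) - 2, by omega⟩ : Fin (2 * h + 2))))
        (by rw [hi]) (by show (u.2 : ℕ) - 2 = (v.2 : ℕ) + 1; omega)).symm⟩

lemma dist_eq_three_iff (hr : 4 ≤ r) (hre : 2 ∣ r) {u v : ZMod r × Fin (2 * h + 2)}
    (heps : (u.1.val + (u.2 : ℕ)) % 2 = 0) :
    (AT r h).dist u v = 3 ↔ Bset u v := by
  rw [dist3_iff hr hre]
  constructor
  · rintro ⟨⟨a, b, h1, h2, h3⟩, hnadj, -⟩
    exact chain_classify hr hre heps h1 h2 h3 hnadj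
  · intro hB
    exact ⟨B_chain hr hre heps hB, B_not_adj hr hre heps hB, B_ne hr hB⟩
end AuxAT

section Aux2
variable {r h : ℕ}

instance {r h : ℕ} (u v : ZMod r × Fin (2 * h + 2)) : Decidable (Bset u v) :=
  decidable_of_iff
    ((v.1 = u.1 + 2 ∧ (v.2 : ℕ) = (u.2 : ℕ) + 1) ∨
    (v.1 = u.1 + 2 ∧ (u.2 : ℕ) = (v.2 : ℕ) + 1) ∨
    (v.1 = u.1 + 1 ∧ (v.2 : ℕ) = (u.2 : ℕ) + 2) ∨
    (v.1 = u.1 + 1 ∧ (u.2 : ℕ) = (v.2 : ℕ) + 2) ∨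
    (v.1 = u.1 - 1 ∧ (v.2 : ℕ) = (u.2 : ℕ) + 2) ∨
    (v.1 = u.1 - 1 ∧ (u.2 : ℕ) = (v.2 : ℕ) + 2) ∨
    (v.1 = u.1 - 1 ∧ (v.2 : ℕ) = (u.2 : ℕ)) ∨
    (v.1 = u.1 ∧ (v.2 : ℕ) = (u.2 : ℕ) + 3) ∨
    (v.1 = u.1 ∧ (u.2 : ℕ) = (v.2 : ℕ) + 3)) Iff.rfl

lemma B_parity (hr : 4 ≤ r) (hre : 2 ∣ r) {u v : ZMod r × Fin (2 * h + 2)} (hB : Bset u v) :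
    (v.1.val + (v.2 : ℕ) + (u.1.val + (u.2 : ℕ))) % 2 = 1 := by
  have h1 := step_parity hr hre u.1
  have h2 := step_parity hr hre (u.1 + 1)
  have h3 := step_parity' hr hre u.1
  have e2 : u.1 + 2 = u.1 + 1 + 1 := by ring
  rcases hB with ⟨hi, hj⟩ | ⟨hi, hj⟩ | ⟨hi, hj⟩ | ⟨hi, hj⟩ | ⟨hi, hj⟩ | ⟨hi, hj⟩ |
    ⟨hi, hj⟩ | ⟨hi, hj⟩ | ⟨hi, hj⟩ <;> rw [hi] <;> first | omega | (rw [e2]; omega)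

lemma cardFinEq (n m : ℕ) : (Finset.univ.filter (fun x : Fin n => (x : ℕ) = m)).card =
    if m < n then 1 else 0 := by
  split_ifs with hm
  · rw [Finset.card_eq_one]
    exact ⟨⟨m, hm⟩, Finset.eq_singleton_iff_unique_mem.mpr
      ⟨Finset.mem_filter.mpr ⟨Finset.mem_univ _, rfl⟩,
        fun x hx => Fin.ext (by simpa using (Finset.mem_filter.mp hx).2)⟩⟩
  · rw [Finset.card_eq_zero]
    ext x
    simp only [Finset.mem_filter, Finset.mem_univ, true_and, Finset.notMem_empty, iff_false]
    intro hx
    exact hm (hx ▸ x.isLt)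

lemma cardFinEq' (n m c : ℕ) : (Finset.univ.filter (fun x : Fin n => m = (x : ℕ) + c)).card =
    if c ≤ m ∧ m - c < n then 1 else 0 := by
  split_ifs with hm
  · rw [Finset.card_eq_one]
    refine ⟨⟨m - c, hm.2⟩, ?_⟩
    ext x
    simp only [Finset.mem_filter, Finset.mem_univ, true_and, Finset.mem_singleton, Fin.ext_iff]
    constructor
    · intro hx; show (x : ℕ) = m - c; omega
    · intro hx; have hx' : (x : ℕ) = m - c := hx; omega
  · rw [Finset.card_eq_zero]
    ext x
    simp only [Finset.mem_filter, Finset.mem_univ, true_and, Finset.notMem_empty, iff_false]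
    have := x.isLt
    omega

lemma card_group {n : ℕ} [NeZero r] (a : ZMod r) (S : Fin n → Prop) [DecidablePred S] :
    (Finset.univ.filter (fun v : ZMod r × Fin n => v.1 = a ∧ S v.2)).card =
      (Finset.univ.filter S).card := by
  apply Finset.card_bij (fun v _ => v.2)
  · intro v hv
    simp only [Finset.mem_filter, Finset.mem_univ, true_and] at hv ⊢
    exact hv.2
  · intro v hv w hw hvw
    simp only [Finset.mem_filter, Finset.mem_univ, true_and] at hv hw
    exact Prod.ext (hv.1.trans hw.1.symm) hvw
  · intro x hx
    simp only [Finset.mem_filter, Finset.mem_univ, true_and] at hx ⊢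
    exact ⟨(a, x), ⟨rfl, hx⟩, rfl⟩

lemma count_B (hr : 4 ≤ r) (hre : 2 ∣ r) (u : ZMod r × Fin (2 * h + 2)) :
    haveI : NeZero r := ⟨by omega⟩
    (Finset.univ.filter (fun v => Bset u v)).card =
      ((if (u.2 : ℕ) + 1 < 2 * h + 2 then 1 else 0) + (if 1 ≤ (u.2 : ℕ) then 1 else 0)) +
      (((if (u.2 : ℕ) + 2 < 2 * h + 2 then 1 else 0) + (if 2 ≤ (u.2 : ℕ) then 1 else 0)) +
      (((if (u.2 : ℕ) + 2 < 2 * h + 2 then 1 else 0) + ((if 2 ≤ (u.2 : ℕ) then 1 else 0) + 1)) +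
      ((if (u.2 : ℕ) + 3 < 2 * h + 2 then 1 else 0) + (if 3 ≤ (u.2 : ℕ) then 1 else 0)))) := by
  haveI : NeZero r := ⟨by omega⟩
  have hu2 := u.2.isLt
  have hBiff : ∀ v ∈ Finset.univ, Bset u v ↔
      ((v.1 = u.1 + 2 ∧ ((v.2 : ℕ) = (u.2 : ℕ) + 1 ∨ (u.2 : ℕ) = (v.2 : ℕ) + 1)) ∨
      ((v.1 = u.1 + 1 ∧ ((v.2 : ℕ) = (u.2 : ℕ) + 2 ∨ (u.2 : ℕ) = (v.2 : ℕ) + 2)) ∨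
      ((v.1 = u.1 - 1 ∧ ((v.2 : ℕ) = (u.2 : ℕ) + 2 ∨ ((u.2 : ℕ) = (v.2 : ℕ) + 2 ∨ (v.2 : ℕ) = (u.2 : ℕ)))) ∨
      (v.1 = u.1 ∧ ((v.2 : ℕ) = (u.2 : ℕ) + 3 ∨ (u.2 : ℕ) = (v.2 : ℕ) + 3))))) := by
    intro v _
    unfold Bset
    constructor
    · rintro (hc | hc | hc | hc | hc | hc | hc | hc | hc)
      exacts [Or.inl ⟨hc.1, Or.inl hc.2⟩, Or.inl ⟨hc.1, Or.inr hc.2⟩,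
        Or.inr (Or.inl ⟨hc.1, Or.inl hc.2⟩), Or.inr (Or.inl ⟨hc.1, Or.inr hc.2⟩),
        Or.inr (Or.inr (Or.inl ⟨hc.1, Or.inl hc.2⟩)),
        Or.inr (Or.inr (Or.inl ⟨hc.1, Or.inr (Or.inl hc.2)⟩)),
        Or.inr (Or.inr (Or.inl ⟨hc.1, Or.inr (Or.inr hc.2)⟩)),
        Or.inr (Or.inr (Or.inr ⟨hc.1, Or.inl hc.2⟩)),
        Or.inr (Or.inr (Or.inr ⟨hc.1, Or.inr hc.2⟩))]
    · rintro (⟨h1, h2 | h2⟩ | ⟨h1, h2 | h2⟩ | ⟨h1, h2 | h2 | h2⟩ | ⟨h1, h2 | h2⟩)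
      exacts [Or.inl ⟨h1, h2⟩, Or.inr (Or.inl ⟨h1, h2⟩),
        Or.inr (Or.inr (Or.inl ⟨h1, h2⟩)), Or.inr (Or.inr (Or.inr (Or.inl ⟨h1, h2⟩))),
        Or.inr (Or.inr (Or.inr (Or.inr (Or.inl ⟨h1, h2⟩)))),
        Or.inr (Or.inr (Or.inr (Or.inr (Or.inr (Or.inl ⟨h1, h2⟩))))),
        Or.inr (Or.inr (Or.inr (Or.inr (Or.inr (Or.inr (Or.inl ⟨h1, h2⟩)))))),
        Or.inr (Or.inr (Or.inr (Or.inr (Or.inr (Or.inr (Or.inr (Or.inl ⟨h1, h2⟩))))))),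
        Or.inr (Or.inr (Or.inr (Or.inr (Or.inr (Or.inr (Or.inr (Or.inr ⟨h1, h2⟩)))))))]
  rw [Finset.filter_congr hBiff]
  have hg1 : (Finset.univ.filter (fun v : ZMod r × Fin (2 * h + 2) =>
      v.1 = u.1 + 2 ∧ ((v.2 : ℕ) = (u.2 : ℕ) + 1 ∨ (u.2 : ℕ) = (v.2 : ℕ) + 1))).card =
      ((if (u.2 : ℕ) + 1 < 2 * h + 2 then 1 else 0) + (if 1 ≤ (u.2 : ℕ) then 1 else 0)) := by
    refine (card_group (u.1 + 2) (fun y : Fin (2 * h + 2) =>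
      (y : ℕ) = (u.2 : ℕ) + 1 ∨ (u.2 : ℕ) = (y : ℕ) + 1)).trans ?_
    rw [Finset.filter_or, Finset.card_union_of_disjoint, cardFinEq, cardFinEq']
    · split_ifs <;> omega
    · rw [Finset.disjoint_left]
      intro x hx1 hx2
      simp only [Finset.mem_filter] at hx1 hx2
      omega
  have hg2 : (Finset.univ.filter (fun v : ZMod r × Fin (2 * h + 2) =>
      v.1 = u.1 + 1 ∧ ((v.2 : ℕ) = (u.2 : ℕ) + 2 ∨ (u.2 : ℕ) = (v.2 : ℕ) + 2))).card =
      ((if (u.2 : ℕ) + 2 < 2 * h + 2 then 1 else 0) + (if 2 ≤ (u.2 : ℕ) then 1 else 0)) := by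
    refine (card_group (u.1 + 1) (fun y : Fin (2 * h + 2) =>
      (y : ℕ) = (u.2 : ℕ) + 2 ∨ (u.2 : ℕ) = (y : ℕ) + 2)).trans ?_
    rw [Finset.filter_or, Finset.card_union_of_disjoint, cardFinEq, cardFinEq']
    · split_ifs <;> omega
    · rw [Finset.disjoint_left]
      intro x hx1 hx2
      simp only [Finset.mem_filter] at hx1 hx2
      omega
  have hg3 : (Finset.univ.filter (fun v : ZMod r × Fin (2 * h + 2) =>
      v.1 = u.1 - 1 ∧ ((v.2 : ℕ) = (u.2 : ℕ) + 2 ∨ ((u.2 : ℕ) = (v.2 : ℕ) + 2 ∨ (v.2 : ℕ) = (u.2 : ℕ))))).card =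
      ((if (u.2 : ℕ) + 2 < 2 * h + 2 then 1 else 0) + ((if 2 ≤ (u.2 : ℕ) then 1 else 0) + 1)) := by
    refine (card_group (u.1 - 1) (fun y : Fin (2 * h + 2) =>
      (y : ℕ) = (u.2 : ℕ) + 2 ∨ ((u.2 : ℕ) = (y : ℕ) + 2 ∨ (y : ℕ) = (u.2 : ℕ)))).trans ?_
    rw [Finset.filter_or, Finset.card_union_of_disjoint, Finset.filter_or,
      Finset.card_union_of_disjoint, cardFinEq, cardFinEq', cardFinEq]
    · split_ifs <;> omega
    · rw [Finset.disjoint_left]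
      intro x hx1 hx2
      simp only [Finset.mem_filter] at hx1 hx2
      omega
    · rw [Finset.disjoint_left]
      intro x hx1 hx2
      simp only [Finset.mem_filter, Finset.mem_union] at hx1 hx2
      omega
  have hg4 : (Finset.univ.filter (fun v : ZMod r × Fin (2 * h + 2) =>
      v.1 = u.1 ∧ ((v.2 : ℕ) = (u.2 : ℕ) + 3 ∨ (u.2 : ℕ) = (v.2 : ℕ) + 3))).card =
      ((if (u.2 : ℕ) + 3 < 2 * h + 2 then 1 else 0) + (if 3 ≤ (u.2 : ℕ) then 1 else 0)) := by
    refine (card_group u.1 (fun y : Fin (2 * h + 2) =>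
      (y : ℕ) = (u.2 : ℕ) + 3 ∨ (u.2 : ℕ) = (y : ℕ) + 3)).trans ?_
    rw [Finset.filter_or, Finset.card_union_of_disjoint, cardFinEq, cardFinEq']
    · split_ifs <;> omega
    · rw [Finset.disjoint_left]
      intro x hx1 hx2
      simp only [Finset.mem_filter] at hx1 hx2
      omega
  rw [Finset.filter_or, Finset.card_union_of_disjoint, Finset.filter_or,
    Finset.card_union_of_disjoint, Finset.filter_or, Finset.card_union_of_disjoint,
    hg1, hg2, hg3, hg4]
  · -- disjoint G3 vs G4
    rw [Finset.disjoint_left]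
    rintro ⟨x1, x2⟩ hx1 hx2
    simp only [Finset.mem_filter] at hx1 hx2
    exact shift_ne hr (u.1 - 1) 1 (by omega) (by omega)
      (by push_cast; linear_combination hx1.2.1 - hx2.2.1)
  · -- disjoint G2 vs G3 ∨ G4
    rw [Finset.disjoint_left]
    rintro ⟨x1, x2⟩ hx1 hx2
    simp only [Finset.mem_filter, Finset.mem_union] at hx1 hx2
    rcases hx2.2 with ⟨hx2a, -⟩ | ⟨hx2a, -⟩
    · exact shift_ne hr (u.1 - 1) 2 (by omega) (by omega)
        (by push_cast; linear_combination hx2a - hx1.2.1)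
    · exact shift_ne hr u.1 1 (by omega) (by omega)
        (by push_cast; linear_combination hx2a - hx1.2.1)
  · -- disjoint G1 vs G2 ∨ G3 ∨ G4
    rw [Finset.disjoint_left]
    rintro ⟨x1, x2⟩ hx1 hx2
    simp only [Finset.mem_filter, Finset.mem_union] at hx1 hx2
    rcases hx2.2 with ⟨hx2a, -⟩ | ⟨hx2a, -⟩ | ⟨hx2a, -⟩
    · exact shift_ne hr (u.1 + 1) 1 (by omega) (by omega)
        (by push_cast; linear_combination hx2a - hx1.2.1)
    · exact shift_ne hr (u.1 - 1) 3 (by omega) (by omega)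
        (by push_cast; linear_combination hx2a - hx1.2.1)
    · exact shift_ne hr u.1 2 (by omega) (by omega)
        (by push_cast; linear_combination hx2a - hx1.2.1)
end Aux2

section Aux3
variable {r h : ℕ}

lemma range_parity (j m : ℕ) :
    ((Finset.range (m + m)).filter (fun x => (x + j) % 2 = 0)).card = m := by
  induction m with
  | zero => simp
  | succ m ih =>
      have he : m + 1 + (m + 1) = (m + m) + 1 + 1 := by ring
      rw [he, Finset.range_add_one, Finset.range_add_one, Finset.filter_insert, Finset.filter_insert]
      by_cases h1 : (m + m + j) % 2 = 0
      · have h2 : ¬ ((m + m + 1 + j) % 2 = 0) := by omega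
        rw [if_neg h2, if_pos h1, Finset.card_insert_of_notMem (by simp), ih]
      · have h2 : (m + m + 1 + j) % 2 = 0 := by omega
        rw [if_pos h2, if_neg h1, Finset.card_insert_of_notMem (by simp), ih]

lemma card_even_col (hr : 4 ≤ r) {m : ℕ} (hm : r = m + m) (j : ℕ) :
    haveI : NeZero r := ⟨by omega⟩
    (Finset.univ.filter (fun i : ZMod r => (i.val + j) % 2 = 0)).card = m := by
  haveI : NeZero r := ⟨by omega⟩
  have key : (Finset.univ.filter (fun i : ZMod r => (i.val + j) % 2 = 0)).card =
      ((Finset.range r).filter (fun x => (x + j) % 2 = 0)).card := by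
    apply Finset.card_bij (fun i _ => i.val)
    · intro a ha
      simp only [Finset.mem_filter, Finset.mem_univ, true_and, Finset.mem_range] at ha ⊢
      exact ⟨ZMod.val_lt a, ha⟩
    · intro a _ b _ hab
      exact ZMod.val_injective r hab
    · intro x hx
      simp only [Finset.mem_filter, Finset.mem_univ, true_and, Finset.mem_range] at hx
      exact ⟨(x : ZMod r), by simp [ZMod.val_cast_of_lt hx.1, hx.2], ZMod.val_cast_of_lt hx.1⟩
  rw [key, hm, range_parity]

lemma wp_eq (hr : 4 ≤ r) (hre : 2 ∣ r) :
    wienerPolarity (AT r h) = Nat.card {q : (ZMod r × Fin (2 * h + 2)) × (ZMod r × Fin (2 * h + 2)) //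
      (q.1.1.val + (q.1.2 : ℕ)) % 2 = 0 ∧ Bset q.1 q.2} := by
  unfold wienerPolarity
  refine (Nat.card_congr (Equiv.ofBijective
    (fun q => ⟨s(q.1.1, q.1.2), (dist_eq_three_iff hr hre q.2.1).mpr q.2.2⟩) ⟨?_, ?_⟩)).symm
  · rintro ⟨⟨u, v⟩, hu0, hB⟩ ⟨⟨u', v'⟩, hu0', hB'⟩ heq
    replace heq := congrArg Subtype.val heq
    simp only [Subtype.mk.injEq, Sym2.eq, Sym2.rel_iff', Prod.mk.injEq, Prod.swap_prod_mk]
      at heq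
    rcases heq with ⟨rfl, rfl⟩ | ⟨rfl, rfl⟩
    · rfl
    · have hp := B_parity hr hre hB
      dsimp only at hp hu0 hu0'
      omega
  · rintro ⟨p, hp⟩
    revert hp
    induction p using Sym2.ind with
    | _ u v =>
      intro hp
      have hd : (AT r h).dist u v = 3 := hp
      obtain ⟨⟨a, b, h1, h2, h3⟩, -, -⟩ := (dist3_iff hr hre u v).mp hd
      have p1 := adj_parity hr hre h1
      have p2 := adj_parity hr hre h2
      have p3 := adj_parity hr hre h3
      by_cases hu0 : (u.1.val + (u.2 : ℕ)) % 2 = 0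
      · exact ⟨⟨(u, v), hu0, (dist_eq_three_iff hr hre hu0).mp hd⟩, Subtype.ext rfl⟩
      · have hv0 : (v.1.val + (v.2 : ℕ)) % 2 = 0 := by omega
        have hd' : (AT r h).dist v u = 3 := by rw [SimpleGraph.dist_comm]; exact hd
        exact ⟨⟨(v, u), hv0, (dist_eq_three_iff hr hre hv0).mp hd'⟩,
          Subtype.ext (Sym2.eq_swap)⟩

end Aux3

theorem wienerPolarity_AT (r h : ℕ) (hr : 4 ≤ r) (hre : Even r) (hh : 1 ≤ h) :
    wienerPolarity (AT r h) = 9 * r * h + r := by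
  haveI : NeZero r := ⟨by omega⟩
  obtain ⟨m, hm⟩ := hre
  have hre2 : 2 ∣ r := ⟨m, by omega⟩
  rw [wp_eq hr hre2, Nat.card_eq_fintype_card,
    Fintype.card_congr (Equiv.subtypeProdEquivSigmaSubtype
      (fun (u v : ZMod r × Fin (2 * h + 2)) =>
        (u.1.val + (u.2 : ℕ)) % 2 = 0 ∧ Bset u v)),
    Fintype.card_sigma]
  have hcard : ∀ u : ZMod r × Fin (2 * h + 2),
      Fintype.card {v // (u.1.val + (u.2 : ℕ)) % 2 = 0 ∧ Bset u v} =
      if (u.1.val + (u.2 : ℕ)) % 2 = 0 then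
      (((if (u.2 : ℕ) + 1 < 2 * h + 2 then 1 else 0) + (if 1 ≤ (u.2 : ℕ) then 1 else 0)) +
      (((if (u.2 : ℕ) + 2 < 2 * h + 2 then 1 else 0) + (if 2 ≤ (u.2 : ℕ) then 1 else 0)) +
      (((if (u.2 : ℕ) + 2 < 2 * h + 2 then 1 else 0) + ((if 2 ≤ (u.2 : ℕ) then 1 else 0) + 1)) +
      ((if (u.2 : ℕ) + 3 < 2 * h + 2 then 1 else 0) + (if 3 ≤ (u.2 : ℕ) then 1 else 0))))) else 0 := by
    intro u
    rw [Fintype.card_subtype]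
    by_cases hu0 : (u.1.val + (u.2 : ℕ)) % 2 = 0
    · rw [if_pos hu0, ← count_B hr hre2 u]
      apply Finset.card_nbij id (fun v hv => by simpa using (Finset.mem_filter.mp hv).2.2)
        (Set.injOn_id _)
      intro v hv
      simp only [Finset.coe_filter, Finset.mem_univ, true_and, Set.mem_image, Set.mem_setOf_eq]
        at hv ⊢
      exact ⟨v, ⟨hu0, hv⟩, rfl⟩
    · rw [if_neg hu0, Finset.card_eq_zero]
      ext v
      simp only [Finset.mem_filter, Finset.mem_univ, true_and, Finset.notMem_empty, iff_false]
      rintro ⟨hc, -⟩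
      exact hu0 hc
  rw [Finset.sum_congr rfl (fun u _ => hcard u), Fintype.sum_prod_type, Finset.sum_comm]
  have hinner : ∀ j : Fin (2 * h + 2), ∀ c : ℕ,
      (∑ i : ZMod r, if (i.val + (j : ℕ)) % 2 = 0 then c else 0) = m * c := by
    intro j c
    rw [← Finset.sum_filter, Finset.sum_const, card_even_col hr hm, smul_eq_mul]
  dsimp only
  have hsum2 : (∑ y : Fin (2 * h + 2), ∑ x : ZMod r,
      (if (x.val + (y : ℕ)) % 2 = 0 then (((if (y : ℕ) + 1 < 2 * h + 2 then 1 else 0) + (if 1 ≤ (y : ℕ) then 1 else 0)) +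
      (((if (y : ℕ) + 2 < 2 * h + 2 then 1 else 0) + (if 2 ≤ (y : ℕ) then 1 else 0)) +
      (((if (y : ℕ) + 2 < 2 * h + 2 then 1 else 0) + ((if 2 ≤ (y : ℕ) then 1 else 0) + 1)) +
      ((if (y : ℕ) + 3 < 2 * h + 2 then 1 else 0) + (if 3 ≤ (y : ℕ) then 1 else 0))))) else 0)) =
      ∑ y : Fin (2 * h + 2), m * (((if (y : ℕ) + 1 < 2 * h + 2 then 1 else 0) + (if 1 ≤ (y : ℕ) then 1 else 0)) +
      (((if (y : ℕ) + 2 < 2 * h + 2 then 1 else 0) + (if 2 ≤ (y : ℕ) then 1 else 0)) +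
      (((if (y : ℕ) + 2 < 2 * h + 2 then 1 else 0) + ((if 2 ≤ (y : ℕ) then 1 else 0) + 1)) +
      ((if (y : ℕ) + 3 < 2 * h + 2 then 1 else 0) + (if 3 ≤ (y : ℕ) then 1 else 0))))) :=
    Finset.sum_congr rfl (fun j _ => hinner j _)
  rw [hsum2, ← Finset.mul_sum]
  rw [show (∑ y : Fin (2 * h + 2),
      (((if (y : ℕ) + 1 < 2 * h + 2 then 1 else 0) + (if 1 ≤ (y : ℕ) then 1 else 0)) +
      (((if (y : ℕ) + 2 < 2 * h + 2 then 1 else 0) + (if 2 ≤ (y : ℕ) then 1 else 0)) +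
      (((if (y : ℕ) + 2 < 2 * h + 2 then 1 else 0) + ((if 2 ≤ (y : ℕ) then 1 else 0) + 1)) +
      ((if (y : ℕ) + 3 < 2 * h + 2 then 1 else 0) + (if 3 ≤ (y : ℕ) then 1 else 0)))))) =
      ∑ j ∈ Finset.range (2 * h + 2),
      (((if j + 1 < 2 * h + 2 then 1 else 0) + (if 1 ≤ j then 1 else 0)) +
      (((if j + 2 < 2 * h + 2 then 1 else 0) + (if 2 ≤ j then 1 else 0)) +
      (((if j + 2 < 2 * h + 2 then 1 else 0) + ((if 2 ≤ j then 1 else 0) + 1)) +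
      ((if j + 3 < 2 * h + 2 then 1 else 0) + (if 3 ≤ j then 1 else 0))))) from
    Fin.sum_univ_eq_sum_range (fun j =>
      (((if j + 1 < 2 * h + 2 then 1 else 0) + (if 1 ≤ j then 1 else 0)) +
      (((if j + 2 < 2 * h + 2 then 1 else 0) + (if 2 ≤ j then 1 else 0)) +
      (((if j + 2 < 2 * h + 2 then 1 else 0) + ((if 2 ≤ j then 1 else 0) + 1)) +
      ((if j + 3 < 2 * h + 2 then 1 else 0) + (if 3 ≤ j then 1 else 0)))))) (2 * h + 2)]
  have e1 : (∑ j ∈ Finset.range (2 * h + 2), if j + 1 < 2 * h + 2 then 1 else 0) = 2 * h + 1 := by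
    rw [← Finset.card_filter]
    rw [show (Finset.range (2 * h + 2)).filter (fun j => j + 1 < 2 * h + 2) =
      Finset.range (2 * h + 1) by ext x; simp [Finset.mem_filter, Finset.mem_range]; omega]
    exact Finset.card_range _
  have e2 : (∑ j ∈ Finset.range (2 * h + 2), if 1 ≤ j then 1 else 0) = 2 * h + 1 := by
    rw [← Finset.card_filter]
    rw [show (Finset.range (2 * h + 2)).filter (fun j => 1 ≤ j) = Finset.Ico 1 (2 * h + 2) by
      ext x; simp [Finset.mem_filter, Finset.mem_range, Finset.mem_Ico]; omega]
    rw [Nat.card_Ico]; omega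
  have e3 : (∑ j ∈ Finset.range (2 * h + 2), if j + 2 < 2 * h + 2 then 1 else 0) = 2 * h := by
    rw [← Finset.card_filter]
    rw [show (Finset.range (2 * h + 2)).filter (fun j => j + 2 < 2 * h + 2) =
      Finset.range (2 * h) by ext x; simp [Finset.mem_filter, Finset.mem_range]; omega]
    exact Finset.card_range _
  have e4 : (∑ j ∈ Finset.range (2 * h + 2), if 2 ≤ j then 1 else 0) = 2 * h := by
    rw [← Finset.card_filter]
    rw [show (Finset.range (2 * h + 2)).filter (fun j => 2 ≤ j) = Finset.Ico 2 (2 * h + 2) by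
      ext x; simp [Finset.mem_filter, Finset.mem_range, Finset.mem_Ico]; omega]
    rw [Nat.card_Ico]; omega
  have e5 : (∑ j ∈ Finset.range (2 * h + 2), if j + 3 < 2 * h + 2 then 1 else 0) = 2 * h - 1 := by
    rw [← Finset.card_filter]
    rw [show (Finset.range (2 * h + 2)).filter (fun j => j + 3 < 2 * h + 2) =
      Finset.range (2 * h - 1) by ext x; simp [Finset.mem_filter, Finset.mem_range]; omega]
    exact Finset.card_range _
  have e6 : (∑ j ∈ Finset.range (2 * h + 2), if 3 ≤ j then 1 else 0) = 2 * h - 1 := by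
    rw [← Finset.card_filter]
    rw [show (Finset.range (2 * h + 2)).filter (fun j => 3 ≤ j) = Finset.Ico 3 (2 * h + 2) by
      ext x; simp [Finset.mem_filter, Finset.mem_range, Finset.mem_Ico]; omega]
    rw [Nat.card_Ico]; omega
  have esum : (∑ j ∈ Finset.range (2 * h + 2),
      (((if j + 1 < 2 * h + 2 then 1 else 0) + (if 1 ≤ j then 1 else 0)) +
      (((if j + 2 < 2 * h + 2 then 1 else 0) + (if 2 ≤ j then 1 else 0)) +
      (((if j + 2 < 2 * h + 2 then 1 else 0) + ((if 2 ≤ j then 1 else 0) + 1)) +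
      ((if j + 3 < 2 * h + 2 then 1 else 0) + (if 3 ≤ j then 1 else 0)))))) = 18 * h + 2 := by
    simp only [Finset.sum_add_distrib, e1, e2, e3, e4, e5, e6, Finset.sum_const,
      Finset.card_range, smul_eq_mul, mul_one]
    omega
  rw [esum, hm]
  ring
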